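/- Let g ≥ 1 and let m be a positive integer with m ∉ {1, 2, 3, 4, 6, 10, 12, 18, 30} such that every prime p dividing m satisfies p ≤ 2g+1. Write m = p₁^{α₁}···p_k^{α_k} as a product of powers of distinct primes. Then the sum S₁ = Σ_{i=1}^{k} φ(p_i^{α_i}) satisfies S₁ > m^{α/(g+1)}, where α = log 2 / log 3. -/

import Mathlib

private lemma stmt3_alpha_lt : Real.log 2 / Real.log 3 < 2/3 := by
  rw [div_lt_div_iff₀ (Real.log_pos (by norm_num)) (by norm_num)]
  have h : Real.log 8 < Real.log 9 := Real.log_lt_log (by norm_num) (by norm_num)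
  rw [show (8:ℝ) = 2^3 by norm_num, show (9:ℝ) = 3^2 by norm_num,
    Real.log_pow, Real.log_pow] at h
  push_cast at h; linarith

private lemma stmt3_alpha_pos : 0 < Real.log 2 / Real.log 3 :=
  div_pos (Real.log_pos (by norm_num)) (Real.log_pos (by norm_num))

private lemma stmt3_pp (p a : ℕ) (hp : p.Prime) (h5 : 5 ≤ p ^ a) :
    ((p ^ a : ℕ) : ℝ) ^ (Real.log 2 / Real.log 3) < ((p ^ a).totient : ℝ) := by
  have ha : 1 ≤ a := by
    by_contra h
    interval_cases a <;> simp_all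
  have hX1 : (1:ℝ) < ((p ^ a : ℕ) : ℝ) := by exact_mod_cast lt_of_lt_of_le (by norm_num) h5
  have step1 : ((p ^ a : ℕ) : ℝ) ^ (Real.log 2 / Real.log 3)
      < ((p ^ a : ℕ) : ℝ) ^ (2/3 : ℝ) :=
    Real.rpow_lt_rpow_of_exponent_lt hX1 stmt3_alpha_lt
  refine step1.trans_le ?_
  have hp0 : (0:ℝ) ≤ (p:ℝ) := by positivity
  have hXp : ((p ^ a : ℕ) : ℝ) ^ (2/3 : ℝ) = (p:ℝ) ^ ((a:ℝ) * (2/3)) := by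
    push_cast
    rw [← Real.rpow_natCast (p:ℝ) a, ← Real.rpow_mul hp0]
  have htot : ((p ^ a).totient : ℝ) = (p:ℝ) ^ (a-1) * ((p:ℝ) - 1) := by
    rw [Nat.totient_prime_pow hp ha]
    push_cast [Nat.cast_sub hp.one_le]
    ring
  have hcast : ((a - 1 : ℕ) : ℝ) = (a:ℝ) - 1 := by
    push_cast [Nat.cast_sub ha]; ring
  rw [hXp, htot]
  have hp2 : 2 ≤ p := hp.two_le
  rcases lt_or_ge p 5 with hplt | hpge
  · interval_cases p
    · -- p = 2
      have ha3 : 3 ≤ a := by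
        by_contra h
        interval_cases a <;> simp_all <;> omega
      have key : (2:ℝ) ^ ((a:ℝ) * (2/3)) ≤ (2:ℝ) ^ ((a:ℝ) - 1) := by
        apply Real.rpow_le_rpow_of_exponent_le (by norm_num)
        have : (3:ℝ) ≤ (a:ℝ) := by exact_mod_cast ha3
        linarith
      calc ((2:ℕ):ℝ) ^ ((a:ℝ) * (2/3)) ≤ (2:ℝ) ^ ((a:ℝ) - 1) := by push_cast; exact key
        _ = ((2:ℕ):ℝ) ^ (a-1) * (((2:ℕ):ℝ) - 1) := by
            rw [← hcast, Real.rpow_natCast]; norm_num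
    · -- p = 3
      have ha2 : 2 ≤ a := by
        by_contra h
        interval_cases a <;> simp_all
      push_cast
      have h1 : (3:ℝ) ^ ((a:ℝ) * (2/3)) ≤ (3:ℝ) ^ ((a:ℝ) - 1 + 1/3) := by
        apply Real.rpow_le_rpow_of_exponent_le (by norm_num)
        have : (2:ℝ) ≤ (a:ℝ) := by exact_mod_cast ha2
        linarith
      have h2 : (3:ℝ) ^ ((a:ℝ) - 1 + 1/3) = (3:ℝ) ^ (a-1 : ℕ) * (3:ℝ) ^ (1/3 : ℝ) := by
        rw [Real.rpow_add (by norm_num), ← hcast, Real.rpow_natCast]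
      have h3 : (3:ℝ) ^ (1/3 : ℝ) ≤ 2 := by
        have hcube : ((3:ℝ) ^ (1/3 : ℝ))^(3:ℕ) = 3 := by
          rw [← Real.rpow_natCast ((3:ℝ) ^ (1/3 : ℝ)) 3, ← Real.rpow_mul (by norm_num)]
          norm_num
        apply le_of_pow_le_pow_left₀ (by norm_num : (3:ℕ) ≠ 0) (by norm_num)
        rw [hcube]; norm_num
      calc (3:ℝ) ^ ((a:ℝ) * (2/3)) ≤ (3:ℝ) ^ (a-1 : ℕ) * (3:ℝ) ^ (1/3 : ℝ) := by
            rw [← h2]; exact h1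
        _ ≤ (3:ℝ) ^ (a-1 : ℕ) * 2 := mul_le_mul_of_nonneg_left h3 (by positivity)
        _ = (3:ℝ) ^ (a-1 : ℕ) * (3 - 1) := by norm_num
    · exact absurd hp (by norm_num)
  · -- p ≥ 5
    have hp5 : (5:ℝ) ≤ (p:ℝ) := by exact_mod_cast hpge
    have hq0 : (0:ℝ) < (p:ℝ) := by linarith
    have key : (p:ℝ) ^ (2/3 : ℝ) ≤ (p:ℝ) - 1 := by
      have hcube : ((p:ℝ) ^ (2/3 : ℝ))^(3:ℕ) = (p:ℝ)^(2:ℕ) := by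
        rw [← Real.rpow_natCast ((p:ℝ) ^ (2/3 : ℝ)) 3, ← Real.rpow_mul hq0.le]
        norm_num
      apply le_of_pow_le_pow_left₀ (by norm_num : (3:ℕ) ≠ 0) (by linarith)
      rw [hcube]
      nlinarith
    have h1 : (p:ℝ) ^ ((a:ℝ) * (2/3)) ≤ (p:ℝ) ^ ((a:ℝ) - 1 + 2/3) := by
      apply Real.rpow_le_rpow_of_exponent_le (by linarith)
      have : (1:ℝ) ≤ (a:ℝ) := by exact_mod_cast ha
      linarith
    have h2 : (p:ℝ) ^ ((a:ℝ) - 1 + 2/3) = (p:ℝ) ^ (a-1 : ℕ) * (p:ℝ) ^ (2/3 : ℝ) := by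
      rw [Real.rpow_add hq0, ← hcast, Real.rpow_natCast]
    calc (p:ℝ) ^ ((a:ℝ) * (2/3)) ≤ (p:ℝ) ^ (a-1 : ℕ) * (p:ℝ) ^ (2/3 : ℝ) := by
          rw [← h2]; exact h1
      _ ≤ (p:ℝ) ^ (a-1 : ℕ) * ((p:ℝ) - 1) := mul_le_mul_of_nonneg_left key (by positivity)

theorem stmt_3 (g m : ℕ) (hg : 1 ≤ g) (hm : 0 < m)
    (hnot : m ∉ ({1, 2, 3, 4, 6, 10, 12, 18, 30} : Set ℕ))
    (hprimes : ∀ p : ℕ, p.Prime → p ∣ m → p ≤ 2 * g + 1) :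
    (m : ℝ) ^ ((Real.log 2 / Real.log 3) / ((g : ℝ) + 1)) <
      ((∑ p ∈ m.primeFactors, (p ^ m.factorization p).totient : ℕ) : ℝ) := by
  simp only [Set.mem_insert_iff, Set.mem_singleton_iff, not_or] at hnot
  obtain ⟨h1, h2', h3', h4', h6', h10', h12', h18', h30'⟩ := hnot
  have hm2 : 2 ≤ m := by omega
  have hF : m.primeFactors.Nonempty := Nat.nonempty_primeFactors.mpr (by omega)
  obtain ⟨p₀, hp₀F, hmax⟩ := m.primeFactors.exists_max_image
    (fun p => p ^ m.factorization p) hF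
  have hp₀ : p₀.Prime := Nat.prime_of_mem_primeFactors hp₀F
  set q := p₀ ^ m.factorization p₀ with hqdef
  have hcard : m.primeFactors.card ≤ g + 1 := by
    have h := Finset.card_le_card_of_injOn (f := fun p => (p+1)/2)
        (s := m.primeFactors) (t := Finset.Icc 1 (g+1)) ?_ ?_
    · simpa using h
    · intro p hp
      have hpp := Nat.prime_of_mem_primeFactors hp
      have hle := hprimes p hpp (Nat.dvd_of_mem_primeFactors hp)
      have h2 := hpp.two_le
      simp only [Finset.mem_coe, Finset.mem_Icc]
      omega
    · intro p hp r hr h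
      have ho1 := (Nat.prime_of_mem_primeFactors hp).eq_two_or_odd'
      have ho2 := (Nat.prime_of_mem_primeFactors hr).eq_two_or_odd'
      have g1 := (Nat.prime_of_mem_primeFactors hp).two_le
      have g2 := (Nat.prime_of_mem_primeFactors hr).two_le
      have hh : (p+1)/2 = (r+1)/2 := h
      rcases ho1 with ho1 | ⟨k, ho1⟩ <;> rcases ho2 with ho2 | ⟨l, ho2⟩ <;> omega
  have hmq : m ≤ q ^ (g + 1) := by
    calc m = ∏ p ∈ m.primeFactors, p ^ m.factorization p :=
          (Nat.factorization_prod_pow_eq_self (by omega)).symm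
      _ ≤ ∏ _p ∈ m.primeFactors, q := Finset.prod_le_prod' (fun i hi => hmax i hi)
      _ = q ^ m.primeFactors.card := Finset.prod_const q
      _ ≤ q ^ (g + 1) := Nat.pow_le_pow_right (by
          have := hp₀.two_le
          have : 1 ≤ m.factorization p₀ :=
            (Nat.Prime.factorization_pos_of_dvd hp₀ (by omega)
              (Nat.dvd_of_mem_primeFactors hp₀F))
          calc 1 ≤ 2 := by omega
            _ ≤ q := le_trans hp₀.two_le (Nat.le_self_pow (by omega) _)) hcard
  have hq5 : 5 ≤ q := by
    by_contra hq4
    push_neg at hq4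
    -- every prime power factor is ≤ 4, so m ∣ 12
    have hdvd : m ∣ 12 := by
      rw [← Nat.factorization_le_iff_dvd (by omega) (by norm_num)]
      have h12 : Nat.factorization 12 = Finsupp.single 2 2 + Finsupp.single 3 1 := by
        rw [show (12:ℕ) = 2^2*3^1 by norm_num, Nat.factorization_mul (by norm_num) (by norm_num),
          Nat.Prime.factorization_pow (by norm_num), Nat.Prime.factorization_pow (by norm_num)]
      intro p
      by_cases hp : p ∈ m.primeFactors
      · have hpp := Nat.prime_of_mem_primeFactors hp
        have hple : p ^ m.factorization p ≤ 4 := le_trans (hmax p hp) (by omega)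
        have hpos : 1 ≤ m.factorization p :=
          Nat.Prime.factorization_pos_of_dvd hpp (by omega) (Nat.dvd_of_mem_primeFactors hp)
        have hpl : p ≤ 4 := le_trans (Nat.le_self_pow (by omega) p) hple
        have h2 := hpp.two_le
        rw [h12]
        interval_cases p
        · -- p = 2
          have : m.factorization 2 ≤ 2 := by
            by_contra hc
            push_neg at hc
            have : 2^3 ≤ 2 ^ m.factorization 2 := Nat.pow_le_pow_right (by norm_num) hc
            omega
          simpa using this
        · -- p = 3
          have : m.factorization 3 ≤ 1 := by
            by_contra hc
            push_neg at hc
            have : 3^2 ≤ 3 ^ m.factorization 3 := Nat.pow_le_pow_right (by norm_num) hc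
            omega
          simpa using this
        · exact absurd hpp (by norm_num)
      · have hz : m.factorization p = 0 :=
          Finsupp.notMem_support_iff.mp (by rwa [Nat.support_factorization])
        simp [hz]
    have hle12 := Nat.le_of_dvd (by norm_num) hdvd
    interval_cases m <;> omega
  -- main chain
  have halpha := stmt3_alpha_pos
  have hg1 : (0:ℝ) < (g:ℝ) + 1 := by positivity
  have step1 : (m : ℝ) ^ ((Real.log 2 / Real.log 3) / ((g : ℝ) + 1)) ≤
      (q : ℝ) ^ (Real.log 2 / Real.log 3) := by
    have hcast : ((q ^ (g+1) : ℕ) : ℝ) = (q:ℝ) ^ ((g:ℝ) + 1) := by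
      push_cast
      rw [← Real.rpow_natCast (q:ℝ) (g+1)]
      push_cast
      ring_nf
    calc (m : ℝ) ^ ((Real.log 2 / Real.log 3) / ((g : ℝ) + 1))
        ≤ ((q ^ (g+1) : ℕ) : ℝ) ^ ((Real.log 2 / Real.log 3) / ((g : ℝ) + 1)) := by
          apply Real.rpow_le_rpow (by positivity) (by exact_mod_cast hmq)
          positivity
      _ = (q : ℝ) ^ (Real.log 2 / Real.log 3) := by
          rw [hcast, ← Real.rpow_mul (by positivity)]
          congr 1
          field_simp
  have step2 : ((q : ℕ) : ℝ) ^ (Real.log 2 / Real.log 3) < ((q.totient : ℕ) : ℝ) := by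
    rw [hqdef]
    exact stmt3_pp p₀ (m.factorization p₀) hp₀ (by rw [← hqdef]; exact hq5)
  have step3 : (q.totient : ℝ) ≤
      ((∑ p ∈ m.primeFactors, (p ^ m.factorization p).totient : ℕ) : ℝ) := by
    exact_mod_cast Finset.single_le_sum
      (f := fun p => (p ^ m.factorization p).totient) (fun i _ => Nat.zero_le _) hp₀F
  exact lt_of_le_of_lt step1 (lt_of_lt_of_le step2 step3)
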